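/- Let κ_H > 0 and κ_G ∈ ℝ with κ_G/κ_H ∈ (-2, 0), and let H0 ∈ ℝ. Then there exist constants c1, c2 > 0 such that for all real numbers k1, k2: (κ_H/2)(k1 + k2 - H0)² + κ_G·k1·k2 + c1·H0² ≥ c2·(k1² + k2²). -/
import Mathlib


theorem stmt2 (κH κG H0 : ℝ) (hκH : 0 < κH) (hratio : κG / κH ∈ Set.Ioo (-2 : ℝ) 0) :
    ∃ c1 c2 : ℝ, 0 < c1 ∧ 0 < c2 ∧
      ∀ k1 k2 : ℝ,
        κH/2 * (k1 + k2 - H0)^2 + κG * k1 * k2 + c1 * H0^2 ≥ c2 * (k1^2 + k2^2) := by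
  obtain ⟨h1, h2⟩ := hratio
  have hG : κG < 0 := by
    by_contra h
    push_neg at h
    exact absurd (div_nonneg h hκH.le) (not_le.mpr h2)
  have hA : 0 < κG + 2 * κH := by
    have := (lt_div_iff₀ hκH).mp h1
    linarith
  have hB : 0 < 2 * κH - κG := by linarith
  refine ⟨-κG * κH / (κG + 2 * κH), -κG * (κG + 2 * κH) / (2 * (2 * κH - κG)),
    div_pos (mul_pos (by linarith : (0:ℝ) < -κG) hκH) hA,
    div_pos (mul_pos (by linarith : (0:ℝ) < -κG) hA) (by linarith), fun k1 k2 => ?_⟩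
  rw [ge_iff_le, ← sub_nonneg]
  have hA' : κG + 2 * κH ≠ 0 := ne_of_gt hA
  have hB' : (2 * (2 * κH - κG)) ≠ 0 := by positivity
  have key : 2 * (κG + 2 * κH) * (2 * κH - κG) *
      (κH/2 * (k1 + k2 - H0)^2 + κG * k1 * k2 + (-κG * κH / (κG + 2 * κH)) * H0^2
        - (-κG * (κG + 2 * κH) / (2 * (2 * κH - κG))) * (k1^2 + k2^2))
      = κH * ((κG + 2 * κH) * (k1 + k2) - (2 * κH - κG) * H0)^2
        + (κG + 2 * κH) * κG^2 * (k1 - k2)^2 := by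
    field_simp
    ring
  nlinarith [key, sq_nonneg ((κG + 2 * κH) * (k1 + k2) - (2 * κH - κG) * H0),
    sq_nonneg (k1 - k2), mul_pos (mul_pos (by linarith : (0:ℝ) < 2 * (κG + 2 * κH)) hB) hκH,
    mul_nonneg (mul_nonneg hA.le (sq_nonneg κG)) (sq_nonneg (k1 - k2)),
    mul_nonneg hκH.le (sq_nonneg ((κG + 2 * κH) * (k1 + k2) - (2 * κH - κG) * H0))]
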